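/- Let h be the 5-dimensional real Lie algebra with nonzero brackets [X_1,X_2] = X_2, [X_1,X_3] = -X_3, [X_1,X_4] = -2X_4, [X_2,X_3] = -X_5, and let θ^1 be the first dual basis 1-form. For λ ∉ {-3, -2, -1, 1}, the second deformed cohomology H^2_{λθ^1}(h) vanishes. -/

import Mathlib

open scoped BigOperators

/-- The space of real-valued `k`-cochains on `L` (as bare functions). -/
abbrev Cochain (L : Type*) (k : ℕ) := (Fin k → L) → ℝ

variable {L : Type*} [LieRing L] [LieAlgebra ℝ L]

/-- A cochain is an alternating multilinear map, i.e. an element of `Hom(Λ^k g, ℝ)`. -/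
def IsAltMap {k : ℕ} (θ : Cochain L k) : Prop :=
  ∃ f : AlternatingMap ℝ L ℝ (Fin k), ⇑f = θ

/-- The Chevalley–Eilenberg differential with trivial coefficients:
`(dθ)(X_0,…,X_k) = ∑_{p<q} (-1)^{p+q} θ([X_p,X_q],X_0,…,X̂_p,…,X̂_q,…,X_k)`. -/
def CEd : {k : ℕ} → Cochain L k → Cochain L (k + 1)
  | 0, _ => fun _ => 0
  | (k + 1), θ => fun X =>
      ∑ p : Fin (k + 2), ∑ q : Fin (k + 2),
        if h : (p : ℕ) < (q : ℕ) then
          ((-1 : ℝ) ^ ((p : ℕ) + (q : ℕ))) *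
            θ (Fin.cons ⁅X p, X q⁆
                (Fin.removeNth ⟨(p : ℕ), lt_of_lt_of_le h (Nat.lt_succ_iff.mp q.isLt)⟩
                  (Fin.removeNth q X)))
        else 0

/-- The wedge product `ω ∧ θ` of a 1-cochain with a `k`-cochain. -/
def oneWedge {k : ℕ} (ω : L → ℝ) (θ : Cochain L k) : Cochain L (k + 1) :=
  fun X => ∑ i : Fin (k + 1), ((-1 : ℝ) ^ (i : ℕ)) * ω (X i) * θ (Fin.removeNth i X)

/-- The deformed differential `d_{λω} θ = dθ + λ ω ∧ θ`. -/
def dDef {k : ℕ} (lam : ℝ) (ω : L → ℝ) (θ : Cochain L k) : Cochain L (k + 1) :=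
  CEd θ + lam • oneWedge ω θ

/-- The submodule of alternating multilinear `k`-cochains, i.e. `C^k(g,ℝ) = Hom(Λ^k g, ℝ)`. -/
def AltSub (L : Type*) [LieRing L] [LieAlgebra ℝ L] (k : ℕ) : Submodule ℝ (Cochain L k) where
  carrier := {θ | IsAltMap θ}
  add_mem' := by rintro θ₁ θ₂ ⟨f, rfl⟩ ⟨g, rfl⟩; exact ⟨f + g, rfl⟩
  zero_mem' := ⟨0, rfl⟩
  smul_mem' := by rintro c θ ⟨f, rfl⟩; exact ⟨c • f, rfl⟩

/-- The Chevalley–Eilenberg differential as a linear map. -/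
def CEdL (L : Type*) [LieRing L] [LieAlgebra ℝ L] (k : ℕ) :
    Cochain L k →ₗ[ℝ] Cochain L (k + 1) where
  toFun := CEd
  map_add' θ₁ θ₂ := by
    cases k with
    | zero => funext X; exact (zero_add (0:ℝ)).symm
    | succ k =>
      funext X
      show _ = CEd θ₁ X + CEd θ₂ X
      simp only [CEd, Pi.add_apply]
      rw [← Finset.sum_add_distrib]
      refine Finset.sum_congr rfl fun p _ => ?_
      rw [← Finset.sum_add_distrib]
      refine Finset.sum_congr rfl fun q _ => ?_
      split_ifs <;> simp [mul_add]
  map_smul' c θ := by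
    cases k with
    | zero => funext X; exact (smul_zero c).symm
    | succ k =>
      funext X
      show _ = c * CEd θ X
      simp only [CEd, Pi.smul_apply, smul_eq_mul]
      rw [Finset.mul_sum]
      refine Finset.sum_congr rfl fun p _ => ?_
      rw [Finset.mul_sum]
      refine Finset.sum_congr rfl fun q _ => ?_
      split_ifs with h
      · ring
      · exact (mul_zero c).symm

/-- The operator `θ ↦ ω ∧ θ` as a linear map. -/
def oneWedgeL (L : Type*) [LieRing L] [LieAlgebra ℝ L] (ω : L → ℝ) (k : ℕ) :
    Cochain L k →ₗ[ℝ] Cochain L (k + 1) where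
  toFun := oneWedge ω
  map_add' θ₁ θ₂ := by
    funext X
    simp [oneWedge, mul_add, Finset.sum_add_distrib]
  map_smul' c θ := by
    funext X
    simp only [oneWedge, Pi.smul_apply, smul_eq_mul, RingHom.id_apply]
    rw [Finset.mul_sum]
    exact Finset.sum_congr rfl fun i _ => by ring

/-- The deformed differential `d_{λω}` as a linear map. -/
noncomputable def dDefL (L : Type*) [LieRing L] [LieAlgebra ℝ L]
    (lam : ℝ) (ω : L → ℝ) (k : ℕ) : Cochain L k →ₗ[ℝ] Cochain L (k + 1) :=
  CEdL L k + lam • oneWedgeL L ω k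

/-- Deformed `k`-cocycles: alternating cochains with `d_{λω} θ = 0`. -/
noncomputable def Zdef (L : Type*) [LieRing L] [LieAlgebra ℝ L]
    (lam : ℝ) (ω : L → ℝ) (k : ℕ) : Submodule ℝ (Cochain L k) :=
  AltSub L k ⊓ LinearMap.ker (dDefL L lam ω k)

/-- Deformed `(k+1)`-coboundaries: images under `d_{λω}` of alternating `k`-cochains. -/
noncomputable def Bdef (L : Type*) [LieRing L] [LieAlgebra ℝ L]
    (lam : ℝ) (ω : L → ℝ) (k : ℕ) : Submodule ℝ (Cochain L (k + 1)) :=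
  Submodule.map (dDefL L lam ω k) (AltSub L k)

/-- The deformed cohomology `H^{k+1}_{λω}(g)` = closed forms modulo exact forms. -/
noncomputable abbrev Hdef (L : Type*) [LieRing L] [LieAlgebra ℝ L]
    (lam : ℝ) (ω : L → ℝ) (k : ℕ) :=
  Zdef L lam ω (k + 1) ⧸
    Submodule.comap (Zdef L lam ω (k + 1)).subtype (Bdef L lam ω k)

/-- The 1-cochain associated to a linear functional. -/
def c1 {L : Type*} (f : L → ℝ) : Cochain L 1 := fun X => f (X 0)

/-- The wedge product `f ∧ g` of two 1-forms, as a 2-cochain. -/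
def w2 {L : Type*} (f g : L → ℝ) : Cochain L 2 :=
  fun X => f (X 0) * g (X 1) - f (X 1) * g (X 0)

section Helpers
variable {L : Type*} [LieRing L] [LieAlgebra ℝ L]

lemma cons1_eq (z : L) (v : Fin 0 → L) : Fin.cons z v = ![z] := by
  funext t; fin_cases t; rfl

lemma d1_apply (lam : ℝ) (ω : L → ℝ) (η : Cochain L 1) (X : Fin 2 → L) :
    dDefL L lam ω 1 η X =
      -η ![⁅X 0, X 1⁆] + lam * (ω (X 0) * η ![X 1] - ω (X 1) * η ![X 0]) := by
  have h0 : Fin.removeNth (0 : Fin 2) X = ![X 1] := by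
    funext t; fin_cases t; simp [Fin.removeNth]
  have h1 : Fin.removeNth (1 : Fin 2) X = ![X 0] := by
    funext t; fin_cases t; simp [Fin.removeNth]
  show (CEd η + lam • oneWedge ω η) X = _
  simp only [Pi.add_apply, Pi.smul_apply, smul_eq_mul, CEd, oneWedge, Nat.reduceAdd,
    Fin.sum_univ_two, cons1_eq, h0, h1]
  norm_num
  tauto
end Helpers
section H2
variable {L : Type*} [LieRing L] [LieAlgebra ℝ L]

lemma cons2_eq (z : L) (v : Fin 1 → L) : Fin.cons z v = ![z, v 0] := by
  funext t; fin_cases t <;> simp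

lemma d2_apply (lam : ℝ) (ω : L → ℝ) (θ : Cochain L 2) (X : Fin 3 → L) :
    dDefL L lam ω 2 θ X =
      -θ ![⁅X 0, X 1⁆, X 2] + θ ![⁅X 0, X 2⁆, X 1] - θ ![⁅X 1, X 2⁆, X 0]
      + lam * (ω (X 0) * θ ![X 1, X 2] - ω (X 1) * θ ![X 0, X 2]
        + ω (X 2) * θ ![X 0, X 1]) := by
  have h0 : Fin.removeNth (0 : Fin 3) X = ![X 1, X 2] := by
    funext t; fin_cases t <;> simp [Fin.removeNth, Fin.succAbove]
  have h1 : Fin.removeNth (1 : Fin 3) X = ![X 0, X 2] := by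
    funext t; fin_cases t <;> simp [Fin.removeNth, Fin.succAbove, Fin.lt_def]
  have h2 : Fin.removeNth (2 : Fin 3) X = ![X 0, X 1] := by
    funext t; fin_cases t <;> simp [Fin.removeNth, Fin.succAbove, Fin.lt_def]
  show (CEd θ + lam • oneWedge ω θ) X = _
  simp only [Pi.add_apply, Pi.smul_apply, smul_eq_mul, CEd, oneWedge, Nat.reduceAdd,
    Fin.sum_univ_three, cons2_eq, h0, h1, h2]
  norm_num [Fin.tail, Fin.removeNth, Fin.succAbove, Fin.lt_def]
  ring
end H2
section H3
set_option linter.unusedSectionVars false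
variable {L : Type*} [LieRing L] [LieAlgebra ℝ L]

lemma upd_zero (x' x y : L) : Function.update ![x, y] 0 x' = ![x', y] := by
  funext t; fin_cases t <;> simp [Function.update]

lemma upd_one (x y y' : L) : Function.update ![x, y] 1 y' = ![x, y'] := by
  funext t; fin_cases t <;> simp [Function.update]

lemma alt_smul₀ (g : AlternatingMap ℝ L ℝ (Fin 2)) (c : ℝ) (x y : L) :
    g ![c • x, y] = c * g ![x, y] := by
  have := g.map_update_smul ![x, y] 0 c x
  rwa [upd_zero, upd_zero] at this

lemma alt_smul₁ (g : AlternatingMap ℝ L ℝ (Fin 2)) (c : ℝ) (x y : L) :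
    g ![x, c • y] = c * g ![x, y] := by
  have := g.map_update_smul ![x, y] 1 c y
  rwa [upd_one, upd_one] at this

lemma alt_neg₀ (g : AlternatingMap ℝ L ℝ (Fin 2)) (x y : L) :
    g ![-x, y] = -g ![x, y] := by
  have := alt_smul₀ g (-1) x y; simpa using this

lemma alt_zero₀ (g : AlternatingMap ℝ L ℝ (Fin 2)) (y : L) :
    g ![0, y] = 0 := by
  have := g.map_coord_zero (m := ![0, y]) 0 rfl
  simpa using this

lemma alt_same (g : AlternatingMap ℝ L ℝ (Fin 2)) (x : L) :
    g ![x, x] = 0 :=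
  g.map_eq_zero_of_eq ![x, x] (i := 0) (j := 1) rfl (by decide)

lemma alt_swap (g : AlternatingMap ℝ L ℝ (Fin 2)) (x y : L) :
    g ![y, x] = -g ![x, y] := by
  have h := g.map_swap (v := ![x, y]) (i := (0 : Fin 2)) (j := 1) (by decide)
  have h2 : (![x, y] ∘ Equiv.swap (0 : Fin 2) 1) = ![y, x] := by
    funext t; fin_cases t <;> simp [Equiv.swap_apply_of_ne_of_ne]
  rwa [h2] at h

/-- multilinear map from a bilinear map, on `Fin 2` -/
def mk2 (b : L →ₗ[ℝ] L →ₗ[ℝ] ℝ) : MultilinearMap ℝ (fun _ : Fin 2 => L) ℝ where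
  toFun X := b (X 0) (X 1)
  map_update_add' X i x y := by
    fin_cases i <;> simp [Function.update]
  map_update_smul' X i c x := by
    fin_cases i <;> simp [Function.update]

end H3
set_option maxHeartbeats 2000000 in
/-- for `λ ∉ {-3,-2,-1,1}` the second deformed cohomology
`H^2_{λθ^1}(h)` of the Lie algebra of Example 2 vanishes. -/
theorem H2_deformed_vanishes
    (H : Type*) [LieRing H] [LieAlgebra ℝ H] (E : Module.Basis (Fin 5) ℝ H)
    (b01 : ⁅E 0, E 1⁆ = E 1) (b02 : ⁅E 0, E 2⁆ = -E 2)
    (b03 : ⁅E 0, E 3⁆ = (-2 : ℝ) • E 3) (b12 : ⁅E 1, E 2⁆ = -E 4)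
    (b04 : ⁅E 0, E 4⁆ = 0) (b13 : ⁅E 1, E 3⁆ = 0) (b14 : ⁅E 1, E 4⁆ = 0)
    (b23 : ⁅E 2, E 3⁆ = 0) (b24 : ⁅E 2, E 4⁆ = 0) (b34 : ⁅E 3, E 4⁆ = 0)
    (lam : ℝ) (hlam : lam ∉ ({-3, -2, -1, 1} : Set ℝ)) :
    ∀ x : Hdef H lam (fun v => E.repr v 0) 1, x = 0 := by
  intro x
  obtain ⟨⟨θ, hθ⟩, rfl⟩ := Submodule.Quotient.mk_surjective _ x
  rw [Submodule.Quotient.mk_eq_zero, Submodule.mem_comap]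
  set ω : H → ℝ := fun v => E.repr v 0 with hωdef
  obtain ⟨halt, hker⟩ := hθ
  obtain ⟨f, rfl⟩ := (halt : ∃ g : AlternatingMap ℝ H ℝ (Fin 2), ⇑g = θ)
  -- nonvanishing facts
  simp only [Set.mem_insert_iff, Set.mem_singleton_iff, not_or] at hlam
  obtain ⟨hm3, hm2, hm1, h1⟩ := hlam
  have hl1 : lam - 1 ≠ 0 := sub_ne_zero.mpr h1
  have hl2 : lam + 1 ≠ 0 := fun h => hm1 (by linarith)
  have hl3 : lam + 2 ≠ 0 := fun h => hm2 (by linarith)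
  have hl4 : lam + 3 ≠ 0 := fun h => hm3 (by linarith)
  have hker0 : dDefL H lam ω 2 ⇑f = 0 := hker
  have hdap : ∀ X : Fin 3 → H, dDefL H lam ω 2 ⇑f X = 0 := fun X => congrFun hker0 X
  have hωE : ∀ i : Fin 5, ω (E i) = if i = 0 then 1 else 0 := by
    intro i; simp [hωdef, Module.Basis.repr_self, Finsupp.single_apply]
  -- reversed brackets
  have b10 : ⁅E 1, E 0⁆ = -E 1 := by rw [← lie_skew, b01]
  have b20 : ⁅E 2, E 0⁆ = E 2 := by rw [← lie_skew, b02]; simp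
  have b30 : ⁅E 3, E 0⁆ = (2 : ℝ) • E 3 := by
    rw [← lie_skew, b03]; module
  have b40 : ⁅E 4, E 0⁆ = 0 := by rw [← lie_skew, b04]; simp
  have b21 : ⁅E 2, E 1⁆ = E 4 := by rw [← lie_skew, b12]; simp
  have b31 : ⁅E 3, E 1⁆ = 0 := by rw [← lie_skew, b13]; simp
  have b41 : ⁅E 4, E 1⁆ = 0 := by rw [← lie_skew, b14]; simp
  have b32 : ⁅E 3, E 2⁆ = 0 := by rw [← lie_skew, b23]; simp
  have b42 : ⁅E 4, E 2⁆ = 0 := by rw [← lie_skew, b24]; simp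
  have b43 : ⁅E 4, E 3⁆ = 0 := by rw [← lie_skew, b34]; simp
  -- extract the cocycle equations
  have e012 := hdap ![E 0, E 1, E 2]
  rw [d2_apply] at e012
  simp only [Matrix.cons_val_zero, Matrix.cons_val_one, Matrix.head_cons,
    Matrix.cons_val_two, Matrix.tail_cons, b01, b02, b03, b12, b04, b13, b14, b23, b24, b34,
    b10, b20, b30, b40, b21, b31, b41, b32, b42, b43, hωE,
    alt_neg₀, alt_zero₀, alt_smul₀] at e012
  simp [alt_neg₀, alt_zero₀, alt_smul₀] at e012
  have e013 := hdap ![E 0, E 1, E 3]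
  rw [d2_apply] at e013
  simp only [Matrix.cons_val_zero, Matrix.cons_val_one, Matrix.head_cons,
    Matrix.cons_val_two, Matrix.tail_cons, b01, b02, b03, b12, b04, b13, b14, b23, b24, b34,
    b10, b20, b30, b40, b21, b31, b41, b32, b42, b43, hωE,
    alt_neg₀, alt_zero₀, alt_smul₀] at e013
  simp [alt_neg₀, alt_zero₀, alt_smul₀] at e013
  have e014 := hdap ![E 0, E 1, E 4]
  rw [d2_apply] at e014
  simp only [Matrix.cons_val_zero, Matrix.cons_val_one, Matrix.head_cons,
    Matrix.cons_val_two, Matrix.tail_cons, b01, b02, b03, b12, b04, b13, b14, b23, b24, b34,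
    b10, b20, b30, b40, b21, b31, b41, b32, b42, b43, hωE,
    alt_neg₀, alt_zero₀, alt_smul₀] at e014
  simp [alt_neg₀, alt_zero₀, alt_smul₀] at e014
  have e023 := hdap ![E 0, E 2, E 3]
  rw [d2_apply] at e023
  simp only [Matrix.cons_val_zero, Matrix.cons_val_one, Matrix.head_cons,
    Matrix.cons_val_two, Matrix.tail_cons, b01, b02, b03, b12, b04, b13, b14, b23, b24, b34,
    b10, b20, b30, b40, b21, b31, b41, b32, b42, b43, hωE,
    alt_neg₀, alt_zero₀, alt_smul₀] at e023
  simp [alt_neg₀, alt_zero₀, alt_smul₀] at e023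
  have e024 := hdap ![E 0, E 2, E 4]
  rw [d2_apply] at e024
  simp only [Matrix.cons_val_zero, Matrix.cons_val_one, Matrix.head_cons,
    Matrix.cons_val_two, Matrix.tail_cons, b01, b02, b03, b12, b04, b13, b14, b23, b24, b34,
    b10, b20, b30, b40, b21, b31, b41, b32, b42, b43, hωE,
    alt_neg₀, alt_zero₀, alt_smul₀] at e024
  simp [alt_neg₀, alt_zero₀, alt_smul₀] at e024
  have e034 := hdap ![E 0, E 3, E 4]
  rw [d2_apply] at e034
  simp only [Matrix.cons_val_zero, Matrix.cons_val_one, Matrix.head_cons,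
    Matrix.cons_val_two, Matrix.tail_cons, b01, b02, b03, b12, b04, b13, b14, b23, b24, b34,
    b10, b20, b30, b40, b21, b31, b41, b32, b42, b43, hωE,
    alt_neg₀, alt_zero₀, alt_smul₀] at e034
  simp [alt_neg₀, alt_zero₀, alt_smul₀] at e034
  have e123 := hdap ![E 1, E 2, E 3]
  rw [d2_apply] at e123
  simp only [Matrix.cons_val_zero, Matrix.cons_val_one, Matrix.head_cons,
    Matrix.cons_val_two, Matrix.tail_cons, b01, b02, b03, b12, b04, b13, b14, b23, b24, b34,
    b10, b20, b30, b40, b21, b31, b41, b32, b42, b43, hωE,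
    alt_neg₀, alt_zero₀, alt_smul₀] at e123
  simp [alt_neg₀, alt_zero₀, alt_smul₀] at e123
  -- swap and diagonal facts
  have s10 := alt_swap f (E 0) (E 1)
  have s20 := alt_swap f (E 0) (E 2)
  have s30 := alt_swap f (E 0) (E 3)
  have s40 := alt_swap f (E 0) (E 4)
  have s21 := alt_swap f (E 1) (E 2)
  have s31 := alt_swap f (E 1) (E 3)
  have s41 := alt_swap f (E 1) (E 4)
  have s32 := alt_swap f (E 2) (E 3)
  have s42 := alt_swap f (E 2) (E 4)
  have s43 := alt_swap f (E 3) (E 4)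
  -- canonical cocycle relations
  have h04 : f ![E 0, E 4] = lam * f ![E 1, E 2] := by
    linear_combination (-1 : ℝ) * e012 - s21 + s40
  have h13 : f ![E 1, E 3] = 0 := by
    have h : (lam + 1) * f ![E 1, E 3] = 0 := by linear_combination e013 + 2 * s31
    exact (mul_eq_zero.mp h).resolve_left hl2
  have h14 : f ![E 1, E 4] = 0 := by
    have h : (lam - 1) * f ![E 1, E 4] = 0 := by linear_combination e014
    exact (mul_eq_zero.mp h).resolve_left hl1
  have h23 : f ![E 2, E 3] = 0 := by
    have h : (lam + 3) * f ![E 2, E 3] = 0 := by linear_combination e023 + 2 * s32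
    exact (mul_eq_zero.mp h).resolve_left hl4
  have h24 : f ![E 2, E 4] = 0 := by
    have h : (lam + 1) * f ![E 2, E 4] = 0 := by linear_combination e024
    exact (mul_eq_zero.mp h).resolve_left hl2
  have h34 : f ![E 3, E 4] = 0 := by linear_combination (-1 : ℝ) * e123 + s43
  have d0 := alt_same f (E 0)
  have d1 := alt_same f (E 1)
  have d2 := alt_same f (E 2)
  have d3 := alt_same f (E 3)
  have d4 := alt_same f (E 4)
  -- the primitive 1-form
  set φ : H →ₗ[ℝ] ℝ :=
    (f ![E 0, E 1] / (lam - 1)) • E.coord 1 + (f ![E 0, E 2] / (lam + 1)) • E.coord 2 +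
      (f ![E 0, E 3] / (lam + 2)) • E.coord 3 + f ![E 1, E 2] • E.coord 4 with hφ
  have hφE : ∀ k : Fin 5, φ (E k) =
      (if k = 1 then f ![E 0, E 1] / (lam - 1) else 0) +
      (if k = 2 then f ![E 0, E 2] / (lam + 1) else 0) +
      (if k = 3 then f ![E 0, E 3] / (lam + 2) else 0) +
      (if k = 4 then f ![E 1, E 2] else 0) := by
    intro k
    simp [hφ, Module.Basis.coord_apply, Module.Basis.repr_self, Finsupp.single_apply, eq_comm]
  -- the bilinear model of d_{λω} φ
  set b : H →ₗ[ℝ] H →ₗ[ℝ] ℝ := LinearMap.mk₂ ℝ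
      (fun x y => -φ ⁅x, y⁆ + lam * (E.coord 0 x * φ y - E.coord 0 y * φ x))
      (by intro x x' y; simp [add_lie]; ring)
      (by intro c x y; simp [smul_lie]; ring)
      (by intro x y y'; simp [lie_add]; ring)
      (by intro x c y; simp [lie_smul]; ring) with hb
  have c00 : b (E 0) (E 0) = f ![E 0, E 0] := by
    simp [hb, LinearMap.mk₂_apply, lie_self, b01, b02, b03, b12, b04, b13, b14, b23,
      b24, b34, b10, b20, b30, b40, b21, b31, b41, b32, b42, b43,
      hφE, Module.Basis.coord_apply, Module.Basis.repr_self, Finsupp.single_apply,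
      h04, h13, h14, h23, h24, h34, s10, s20, s30, s40, s21, s31, s41, s32, s42, s43,
      d0, d1, d2, d3, d4]
    try field_simp
    try ring
  have c01 : b (E 0) (E 1) = f ![E 0, E 1] := by
    simp [hb, LinearMap.mk₂_apply, lie_self, b01, b02, b03, b12, b04, b13, b14, b23,
      b24, b34, b10, b20, b30, b40, b21, b31, b41, b32, b42, b43,
      hφE, Module.Basis.coord_apply, Module.Basis.repr_self, Finsupp.single_apply,
      h04, h13, h14, h23, h24, h34, s10, s20, s30, s40, s21, s31, s41, s32, s42, s43,
      d0, d1, d2, d3, d4]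
    try field_simp
    try ring
  have c02 : b (E 0) (E 2) = f ![E 0, E 2] := by
    simp [hb, LinearMap.mk₂_apply, lie_self, b01, b02, b03, b12, b04, b13, b14, b23,
      b24, b34, b10, b20, b30, b40, b21, b31, b41, b32, b42, b43,
      hφE, Module.Basis.coord_apply, Module.Basis.repr_self, Finsupp.single_apply,
      h04, h13, h14, h23, h24, h34, s10, s20, s30, s40, s21, s31, s41, s32, s42, s43,
      d0, d1, d2, d3, d4]
    try field_simp
    try ring
  have c03 : b (E 0) (E 3) = f ![E 0, E 3] := by
    simp [hb, LinearMap.mk₂_apply, lie_self, b01, b02, b03, b12, b04, b13, b14, b23,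
      b24, b34, b10, b20, b30, b40, b21, b31, b41, b32, b42, b43,
      hφE, Module.Basis.coord_apply, Module.Basis.repr_self, Finsupp.single_apply,
      h04, h13, h14, h23, h24, h34, s10, s20, s30, s40, s21, s31, s41, s32, s42, s43,
      d0, d1, d2, d3, d4]
    try field_simp
    try ring
  have c04 : b (E 0) (E 4) = f ![E 0, E 4] := by
    simp [hb, LinearMap.mk₂_apply, lie_self, b01, b02, b03, b12, b04, b13, b14, b23,
      b24, b34, b10, b20, b30, b40, b21, b31, b41, b32, b42, b43,
      hφE, Module.Basis.coord_apply, Module.Basis.repr_self, Finsupp.single_apply,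
      h04, h13, h14, h23, h24, h34, s10, s20, s30, s40, s21, s31, s41, s32, s42, s43,
      d0, d1, d2, d3, d4]
    try field_simp
    try ring
  have c10 : b (E 1) (E 0) = f ![E 1, E 0] := by
    simp [hb, LinearMap.mk₂_apply, lie_self, b01, b02, b03, b12, b04, b13, b14, b23,
      b24, b34, b10, b20, b30, b40, b21, b31, b41, b32, b42, b43,
      hφE, Module.Basis.coord_apply, Module.Basis.repr_self, Finsupp.single_apply,
      h04, h13, h14, h23, h24, h34, s10, s20, s30, s40, s21, s31, s41, s32, s42, s43,
      d0, d1, d2, d3, d4]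
    try field_simp
    try ring
  have c11 : b (E 1) (E 1) = f ![E 1, E 1] := by
    simp [hb, LinearMap.mk₂_apply, lie_self, b01, b02, b03, b12, b04, b13, b14, b23,
      b24, b34, b10, b20, b30, b40, b21, b31, b41, b32, b42, b43,
      hφE, Module.Basis.coord_apply, Module.Basis.repr_self, Finsupp.single_apply,
      h04, h13, h14, h23, h24, h34, s10, s20, s30, s40, s21, s31, s41, s32, s42, s43,
      d0, d1, d2, d3, d4]
    try field_simp
    try ring
  have c12 : b (E 1) (E 2) = f ![E 1, E 2] := by
    simp [hb, LinearMap.mk₂_apply, lie_self, b01, b02, b03, b12, b04, b13, b14, b23,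
      b24, b34, b10, b20, b30, b40, b21, b31, b41, b32, b42, b43,
      hφE, Module.Basis.coord_apply, Module.Basis.repr_self, Finsupp.single_apply,
      h04, h13, h14, h23, h24, h34, s10, s20, s30, s40, s21, s31, s41, s32, s42, s43,
      d0, d1, d2, d3, d4]
    try field_simp
    try ring
  have c13 : b (E 1) (E 3) = f ![E 1, E 3] := by
    simp [hb, LinearMap.mk₂_apply, lie_self, b01, b02, b03, b12, b04, b13, b14, b23,
      b24, b34, b10, b20, b30, b40, b21, b31, b41, b32, b42, b43,
      hφE, Module.Basis.coord_apply, Module.Basis.repr_self, Finsupp.single_apply,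
      h04, h13, h14, h23, h24, h34, s10, s20, s30, s40, s21, s31, s41, s32, s42, s43,
      d0, d1, d2, d3, d4]
    try field_simp
    try ring
  have c14 : b (E 1) (E 4) = f ![E 1, E 4] := by
    simp [hb, LinearMap.mk₂_apply, lie_self, b01, b02, b03, b12, b04, b13, b14, b23,
      b24, b34, b10, b20, b30, b40, b21, b31, b41, b32, b42, b43,
      hφE, Module.Basis.coord_apply, Module.Basis.repr_self, Finsupp.single_apply,
      h04, h13, h14, h23, h24, h34, s10, s20, s30, s40, s21, s31, s41, s32, s42, s43,
      d0, d1, d2, d3, d4]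
    try field_simp
    try ring
  have c20 : b (E 2) (E 0) = f ![E 2, E 0] := by
    simp [hb, LinearMap.mk₂_apply, lie_self, b01, b02, b03, b12, b04, b13, b14, b23,
      b24, b34, b10, b20, b30, b40, b21, b31, b41, b32, b42, b43,
      hφE, Module.Basis.coord_apply, Module.Basis.repr_self, Finsupp.single_apply,
      h04, h13, h14, h23, h24, h34, s10, s20, s30, s40, s21, s31, s41, s32, s42, s43,
      d0, d1, d2, d3, d4]
    try field_simp
    try ring
  have c21 : b (E 2) (E 1) = f ![E 2, E 1] := by
    simp [hb, LinearMap.mk₂_apply, lie_self, b01, b02, b03, b12, b04, b13, b14, b23,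
      b24, b34, b10, b20, b30, b40, b21, b31, b41, b32, b42, b43,
      hφE, Module.Basis.coord_apply, Module.Basis.repr_self, Finsupp.single_apply,
      h04, h13, h14, h23, h24, h34, s10, s20, s30, s40, s21, s31, s41, s32, s42, s43,
      d0, d1, d2, d3, d4]
    try field_simp
    try ring
  have c22 : b (E 2) (E 2) = f ![E 2, E 2] := by
    simp [hb, LinearMap.mk₂_apply, lie_self, b01, b02, b03, b12, b04, b13, b14, b23,
      b24, b34, b10, b20, b30, b40, b21, b31, b41, b32, b42, b43,
      hφE, Module.Basis.coord_apply, Module.Basis.repr_self, Finsupp.single_apply,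
      h04, h13, h14, h23, h24, h34, s10, s20, s30, s40, s21, s31, s41, s32, s42, s43,
      d0, d1, d2, d3, d4]
    try field_simp
    try ring
  have c23 : b (E 2) (E 3) = f ![E 2, E 3] := by
    simp [hb, LinearMap.mk₂_apply, lie_self, b01, b02, b03, b12, b04, b13, b14, b23,
      b24, b34, b10, b20, b30, b40, b21, b31, b41, b32, b42, b43,
      hφE, Module.Basis.coord_apply, Module.Basis.repr_self, Finsupp.single_apply,
      h04, h13, h14, h23, h24, h34, s10, s20, s30, s40, s21, s31, s41, s32, s42, s43,
      d0, d1, d2, d3, d4]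
    try field_simp
    try ring
  have c24 : b (E 2) (E 4) = f ![E 2, E 4] := by
    simp [hb, LinearMap.mk₂_apply, lie_self, b01, b02, b03, b12, b04, b13, b14, b23,
      b24, b34, b10, b20, b30, b40, b21, b31, b41, b32, b42, b43,
      hφE, Module.Basis.coord_apply, Module.Basis.repr_self, Finsupp.single_apply,
      h04, h13, h14, h23, h24, h34, s10, s20, s30, s40, s21, s31, s41, s32, s42, s43,
      d0, d1, d2, d3, d4]
    try field_simp
    try ring
  have c30 : b (E 3) (E 0) = f ![E 3, E 0] := by
    simp [hb, LinearMap.mk₂_apply, lie_self, b01, b02, b03, b12, b04, b13, b14, b23,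
      b24, b34, b10, b20, b30, b40, b21, b31, b41, b32, b42, b43,
      hφE, Module.Basis.coord_apply, Module.Basis.repr_self, Finsupp.single_apply,
      h04, h13, h14, h23, h24, h34, s10, s20, s30, s40, s21, s31, s41, s32, s42, s43,
      d0, d1, d2, d3, d4]
    try field_simp
    try ring
  have c31 : b (E 3) (E 1) = f ![E 3, E 1] := by
    simp [hb, LinearMap.mk₂_apply, lie_self, b01, b02, b03, b12, b04, b13, b14, b23,
      b24, b34, b10, b20, b30, b40, b21, b31, b41, b32, b42, b43,
      hφE, Module.Basis.coord_apply, Module.Basis.repr_self, Finsupp.single_apply,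
      h04, h13, h14, h23, h24, h34, s10, s20, s30, s40, s21, s31, s41, s32, s42, s43,
      d0, d1, d2, d3, d4]
    try field_simp
    try ring
  have c32 : b (E 3) (E 2) = f ![E 3, E 2] := by
    simp [hb, LinearMap.mk₂_apply, lie_self, b01, b02, b03, b12, b04, b13, b14, b23,
      b24, b34, b10, b20, b30, b40, b21, b31, b41, b32, b42, b43,
      hφE, Module.Basis.coord_apply, Module.Basis.repr_self, Finsupp.single_apply,
      h04, h13, h14, h23, h24, h34, s10, s20, s30, s40, s21, s31, s41, s32, s42, s43,
      d0, d1, d2, d3, d4]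
    try field_simp
    try ring
  have c33 : b (E 3) (E 3) = f ![E 3, E 3] := by
    simp [hb, LinearMap.mk₂_apply, lie_self, b01, b02, b03, b12, b04, b13, b14, b23,
      b24, b34, b10, b20, b30, b40, b21, b31, b41, b32, b42, b43,
      hφE, Module.Basis.coord_apply, Module.Basis.repr_self, Finsupp.single_apply,
      h04, h13, h14, h23, h24, h34, s10, s20, s30, s40, s21, s31, s41, s32, s42, s43,
      d0, d1, d2, d3, d4]
    try field_simp
    try ring
  have c34 : b (E 3) (E 4) = f ![E 3, E 4] := by
    simp [hb, LinearMap.mk₂_apply, lie_self, b01, b02, b03, b12, b04, b13, b14, b23,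
      b24, b34, b10, b20, b30, b40, b21, b31, b41, b32, b42, b43,
      hφE, Module.Basis.coord_apply, Module.Basis.repr_self, Finsupp.single_apply,
      h04, h13, h14, h23, h24, h34, s10, s20, s30, s40, s21, s31, s41, s32, s42, s43,
      d0, d1, d2, d3, d4]
    try field_simp
    try ring
  have c40 : b (E 4) (E 0) = f ![E 4, E 0] := by
    simp [hb, LinearMap.mk₂_apply, lie_self, b01, b02, b03, b12, b04, b13, b14, b23,
      b24, b34, b10, b20, b30, b40, b21, b31, b41, b32, b42, b43,
      hφE, Module.Basis.coord_apply, Module.Basis.repr_self, Finsupp.single_apply,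
      h04, h13, h14, h23, h24, h34, s10, s20, s30, s40, s21, s31, s41, s32, s42, s43,
      d0, d1, d2, d3, d4]
    try field_simp
    try ring
  have c41 : b (E 4) (E 1) = f ![E 4, E 1] := by
    simp [hb, LinearMap.mk₂_apply, lie_self, b01, b02, b03, b12, b04, b13, b14, b23,
      b24, b34, b10, b20, b30, b40, b21, b31, b41, b32, b42, b43,
      hφE, Module.Basis.coord_apply, Module.Basis.repr_self, Finsupp.single_apply,
      h04, h13, h14, h23, h24, h34, s10, s20, s30, s40, s21, s31, s41, s32, s42, s43,
      d0, d1, d2, d3, d4]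
    try field_simp
    try ring
  have c42 : b (E 4) (E 2) = f ![E 4, E 2] := by
    simp [hb, LinearMap.mk₂_apply, lie_self, b01, b02, b03, b12, b04, b13, b14, b23,
      b24, b34, b10, b20, b30, b40, b21, b31, b41, b32, b42, b43,
      hφE, Module.Basis.coord_apply, Module.Basis.repr_self, Finsupp.single_apply,
      h04, h13, h14, h23, h24, h34, s10, s20, s30, s40, s21, s31, s41, s32, s42, s43,
      d0, d1, d2, d3, d4]
    try field_simp
    try ring
  have c43 : b (E 4) (E 3) = f ![E 4, E 3] := by
    simp [hb, LinearMap.mk₂_apply, lie_self, b01, b02, b03, b12, b04, b13, b14, b23,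
      b24, b34, b10, b20, b30, b40, b21, b31, b41, b32, b42, b43,
      hφE, Module.Basis.coord_apply, Module.Basis.repr_self, Finsupp.single_apply,
      h04, h13, h14, h23, h24, h34, s10, s20, s30, s40, s21, s31, s41, s32, s42, s43,
      d0, d1, d2, d3, d4]
    try field_simp
    try ring
  have c44 : b (E 4) (E 4) = f ![E 4, E 4] := by
    simp [hb, LinearMap.mk₂_apply, lie_self, b01, b02, b03, b12, b04, b13, b14, b23,
      b24, b34, b10, b20, b30, b40, b21, b31, b41, b32, b42, b43,
      hφE, Module.Basis.coord_apply, Module.Basis.repr_self, Finsupp.single_apply,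
      h04, h13, h14, h23, h24, h34, s10, s20, s30, s40, s21, s31, s41, s32, s42, s43,
      d0, d1, d2, d3, d4]
    try field_simp
    try ring
  have hbE : ∀ i j : Fin 5, b (E i) (E j) = f ![E i, E j] := by
    intro i j
    fin_cases i <;> fin_cases j <;> assumption
  have hGf : mk2 b = f.toMultilinearMap := by
    refine Module.Basis.ext_multilinear (fun _ => E) fun v => ?_
    have hv : (fun i => E (v i)) = ![E (v 0), E (v 1)] := by
      funext t; fin_cases t <;> rfl
    rw [hv]
    exact hbE (v 0) (v 1)
  -- conclude
  show ⇑f ∈ Bdef H lam ω 1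
  refine Submodule.mem_map.mpr ⟨fun X => φ (X 0), ⟨(AlternatingMap.ofSubsingleton ℝ H ℝ 0) φ, rfl⟩, ?_⟩
  funext X
  rw [d1_apply]
  have h1 : ∀ z : H, (![z] : Fin 1 → H) 0 = z := fun z => rfl
  have : -φ ⁅X 0, X 1⁆ + lam * (ω (X 0) * φ (X 1) - ω (X 1) * φ (X 0)) = f X := by
    have hG := congrFun (congrArg DFunLike.coe hGf) X
    simp only [mk2, MultilinearMap.coe_mk, hb, LinearMap.mk₂_apply] at hG
    have hω' : ∀ v, ω v = E.coord 0 v := fun v => by simp [hωdef, Module.Basis.coord_apply]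
    rw [hω', hω']
    convert hG using 2
    rfl
  simpa using this
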